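/- arXiv:2401.04456 — 2 statements merged into one kernel-verified Lean document; each statement's English description precedes it below -/
import Mathlib

section
/- Let F be a plane in ℝ³ with fixed point x_F and ℓ ≥ 0 an integer. Then the space of two-dimensional vector-valued polynomials of total degree ≤ ℓ on F decomposes as a direct sum P^ℓ(F)² = R^ℓ(F) ⊕ R^{c,ℓ}(F), where R^ℓ(F) = rot_F P^{ℓ+1}(F) and R^{c,ℓ}(F) = (x - x_F) P^{ℓ-1}(F). -/
open MvPolynomial

/-- Vector-valued polynomials of total degree ≤ ℓ on a face (identified with ℝ²). -/
def PvecF (ℓ : ℕ) : Set ((Fin 2 → ℝ) → (Fin 2 → ℝ)) :=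
  {v | ∃ p : Fin 2 → MvPolynomial (Fin 2) ℝ,
    (∀ i, (p i).totalDegree ≤ ℓ) ∧ ∀ x i, v x i = eval x (p i)}

/-- `R^ℓ(F) = rot_F P^{ℓ+1}(F)`, with `rot_F f = (∂₂ f, -∂₁ f)`. -/
def RolyF (ℓ : ℕ) : Set ((Fin 2 → ℝ) → (Fin 2 → ℝ)) :=
  {v | ∃ p : MvPolynomial (Fin 2) ℝ, p.totalDegree ≤ ℓ + 1 ∧
    ∀ x, v x 0 = eval x (pderiv 1 p) ∧ v x 1 = -eval x (pderiv 0 p)}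

/-- `R^{c,ℓ}(F) = (x - x_F) P^{ℓ-1}(F)`, with the convention `P^{-1} = {0}`. -/
def RolyCF (ℓ : ℕ) (xF : Fin 2 → ℝ) : Set ((Fin 2 → ℝ) → (Fin 2 → ℝ)) :=
  {v | ∃ q : MvPolynomial (Fin 2) ℝ, (q.totalDegree + 1 ≤ ℓ ∨ q = 0) ∧
    ∀ x i, v x i = (x i - xF i) * eval x q}

noncomputable section PvecAux

abbrev P2 := MvPolynomial (Fin 2) ℝ

/-! ### Basic degree and substitution lemmas -/

lemma tdeg_iff (f : P2) (n : ℕ) :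
    f.totalDegree ≤ n ↔ ∀ α ∈ f.support, α 0 + α 1 ≤ n := by
  rw [MvPolynomial.totalDegree, Finset.sup_le_iff]
  apply forall_congr'; intro α; apply imp_congr_right; intro _
  rw [Finsupp.sum_fintype _ _ (fun _ => rfl), Fin.sum_univ_two]

lemma eval_aeval' (x : Fin 2 → ℝ) (g : Fin 2 → P2) (f : P2) :
    eval x (aeval g f) = eval (fun i => eval x (g i)) f := by
  induction f using MvPolynomial.induction_on with
  | C a => simp
  | add p q hp hq => simp only [map_add, hp, hq]
  | mul_X p i h => simp only [map_mul, aeval_X, eval_X, eval_mul, h]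

lemma aeval_sub_add (c : Fin 2 → ℝ) (f : P2) :
    aeval (fun j => X j - C (c j)) (aeval (fun j => X j + C (c j)) f) = f := by
  induction f using MvPolynomial.induction_on with
  | C a => simp [algebraMap_eq]
  | add p q hp hq => simp only [map_add, hp, hq]
  | mul_X p i h =>
      simp only [map_mul, aeval_X, map_add, algebraMap_eq, aeval_C, h, sub_add_cancel]

lemma pderiv_aeval_add (c : Fin 2 → ℝ) (j : Fin 2) (f : P2) :
    pderiv j (aeval (fun i => X i + C (c i)) f)
      = aeval (fun i => X i + C (c i)) (pderiv j f) := by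
  induction f using MvPolynomial.induction_on with
  | C a => simp [algebraMap_eq]
  | add p q hp hq => simp only [map_add, hp, hq]
  | mul_X p i h =>
      simp only [map_mul, aeval_X, Derivation.leibniz, smul_eq_mul, map_add, h, pderiv_X,
        algebraMap_eq, pderiv_C, add_zero]
      cases' eq_or_ne i j with hij hij
      · subst hij; simp [Pi.single_apply]
      · simp [Pi.single_apply, hij.symm, Ne.symm hij]

lemma tdeg_aeval_add (c : Fin 2 → ℝ) (f : P2) :
    (aeval (fun i => X i + C (c i)) f).totalDegree ≤ f.totalDegree := by
  conv_lhs => rw [f.as_sum]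
  rw [map_sum]
  refine (totalDegree_finset_sum _ _).trans (Finset.sup_le fun α hα => ?_)
  have h1 : ∀ i : Fin 2, (X i + C (c i) : P2).totalDegree ≤ 1 := by
    intro i
    refine (totalDegree_add _ _).trans ?_
    simp [totalDegree_X]
  calc (aeval (fun i => X i + C (c i)) (monomial α (coeff α f))).totalDegree
      ≤ α.sum fun _ e => e := by
        rw [aeval_monomial]
        refine (totalDegree_mul _ _).trans ?_
        rw [algebraMap_eq, totalDegree_C, zero_add]
        refine (totalDegree_finset_prod _ _).trans ?_
        rw [Finsupp.sum]
        refine Finset.sum_le_sum fun i _ => ?_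
        exact (totalDegree_pow _ _).trans (by
          exact Nat.mul_le_mul_left _ (h1 i) |>.trans (by omega))
    _ ≤ f.totalDegree := le_totalDegree hα

/-! ### Euler identity via coefficients -/

lemma X_mul_pderiv_monomial (i : Fin 2) (α : Fin 2 →₀ ℕ) (a : ℝ) :
    (X i : P2) * pderiv i (monomial α a) = monomial α (a * (α i : ℝ)) := by
  rw [pderiv_monomial, X, monomial_mul, one_mul]
  rcases Nat.eq_zero_or_pos (α i) with h | h
  · simp [h]
  · have hs : Finsupp.single i 1 + (α - Finsupp.single i 1) = α := by
      ext j
      simp only [Finsupp.add_apply, Finsupp.tsub_apply, Finsupp.single_apply]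
      split_ifs with hij
      · subst hij; omega
      · omega
    rw [hs]

lemma coeff_X_mul_pderiv (i : Fin 2) (f : P2) (β : Fin 2 →₀ ℕ) :
    coeff β ((X i : P2) * pderiv i f) = (β i : ℝ) * coeff β f := by
  induction f using MvPolynomial.induction_on' with
  | monomial α a =>
      rw [X_mul_pderiv_monomial, coeff_monomial, coeff_monomial]
      rcases eq_or_ne α β with rfl | h
      · simp [mul_comm]
      · simp [h]
  | add p q hp hq => simp only [map_add, mul_add, coeff_add, hp, hq]

lemma euler_vanish (f : P2)
    (h : (X 0 : P2) * pderiv 0 f + (X 1 : P2) * pderiv 1 f = 0) (j : Fin 2) :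
    pderiv j f = 0 := by
  have hf : f = C (coeff 0 f) := by
    ext β
    rcases eq_or_ne β 0 with rfl | hβ
    · simp
    · have h2 : ((β 0 : ℝ) + (β 1 : ℝ)) * coeff β f = 0 := by
        have := congrArg (coeff β) h
        rwa [coeff_add, coeff_X_mul_pderiv, coeff_X_mul_pderiv, coeff_zero, ← add_mul] at this
      have h3 : β 0 + β 1 ≠ 0 := by
        intro h0
        have hb0 : β 0 = 0 := by omega
        have hb1 : β 1 = 0 := by omega
        refine hβ (Finsupp.ext fun j => ?_)
        fin_cases j
        · simpa using hb0
        · simpa using hb1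
      have h4 : coeff β f = 0 := by
        rcases mul_eq_zero.mp h2 with h4 | h4
        · exact absurd (by exact_mod_cast h4) h3
        · exact h4
      simp [h4, coeff_C, Ne.symm hβ]
  rw [hf]; simp

/-! ### Degree of partial derivatives -/

lemma tdeg_pderiv_le (i : Fin 2) (f : P2) {n : ℕ} (h : f.totalDegree ≤ n + 1) :
    (pderiv i f).totalDegree ≤ n := by
  have hrep : pderiv i f
      = ∑ α ∈ f.support, monomial (α - Finsupp.single i 1) (coeff α f * (α i : ℝ)) := by
    conv_lhs => rw [f.as_sum]
    rw [map_sum]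
    simp only [pderiv_monomial]
  rw [tdeg_iff]
  intro β hβ
  have hne := mem_support_iff.mp hβ
  rw [hrep, coeff_sum] at hne
  obtain ⟨α, hα, hne⟩ := Finset.exists_ne_zero_of_sum_ne_zero hne
  rw [coeff_monomial] at hne
  split_ifs at hne with he
  · have hαi : α i ≠ 0 := by
      intro h0
      simp [h0] at hne
    have hd : α 0 + α 1 ≤ n + 1 := (tdeg_iff f (n+1)).mp h α hα
    have hb0 : β 0 = α 0 - (Finsupp.single i 1) 0 := by
      rw [← he, Finsupp.tsub_apply]
    have hb1 : β 1 = α 1 - (Finsupp.single i 1) 1 := by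
      rw [← he, Finsupp.tsub_apply]
    have hs : (Finsupp.single i 1) 0 + (Finsupp.single i 1) 1 = 1 := by
      fin_cases i <;> simp
    have hsi : (Finsupp.single i 1) i = 1 := by simp
    have hi : i = 0 ∨ i = 1 := by
      fin_cases i
      · exact Or.inl rfl
      · exact Or.inr rfl
    rcases hi with rfl | rfl
    · rw [hsi] at hb0
      omega
    · rw [hsi] at hb1
      omega
  · exact absurd rfl hne
lemma pd0_1 (u : ℝ) : pderiv 0 ((X 1 - C u : P2)) = 0 := by
  rw [map_sub, pderiv_X_of_ne (by decide), pderiv_C, sub_zero]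
lemma pd1_0 (u : ℝ) : pderiv 1 ((X 0 - C u : P2)) = 0 := by
  rw [map_sub, pderiv_X_of_ne (by decide), pderiv_C, sub_zero]
lemma pd0_0 (u : ℝ) : pderiv 0 ((X 0 - C u : P2)) = 1 := by
  rw [map_sub, pderiv_X_self, pderiv_C, sub_zero]
lemma pd1_1 (u : ℝ) : pderiv 1 ((X 1 - C u : P2)) = 1 := by
  rw [map_sub, pderiv_X_self, pderiv_C, sub_zero]

lemma pderiv0_prod (u w : ℝ) (a b : ℕ) :
    pderiv 0 ((X 0 - C u)^a * (X 1 - C w)^b : P2)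
      = (a : P2) * ((X 0 - C u)^(a-1) * (X 1 - C w)^b) := by
  rw [pderiv_mul, pderiv_pow, pderiv_pow, pd0_0, pd0_1]; ring

lemma pderiv1_prod (u w : ℝ) (a b : ℕ) :
    pderiv 1 ((X 0 - C u)^a * (X 1 - C w)^b : P2)
      = (b : P2) * ((X 0 - C u)^a * (X 1 - C w)^(b-1)) := by
  rw [pderiv_mul, pderiv_pow, pderiv_pow, pd1_1, pd1_0]; ring

lemma tdeg_XC (i : Fin 2) (u : ℝ) : (X i - C u : P2).totalDegree ≤ 1 := by
  rw [sub_eq_add_neg, ← C_neg]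
  refine (totalDegree_add _ _).trans ?_
  simp [totalDegree_X]

lemma tdeg_prod (u w : ℝ) (a b : ℕ) :
    ((X 0 - C u)^a * (X 1 - C w)^b : P2).totalDegree ≤ a + b := by
  refine (totalDegree_mul _ _).trans (add_le_add ?_ ?_) <;>
    refine (totalDegree_pow _ _).trans ?_
  · exact (Nat.mul_le_mul_left _ (tdeg_XC 0 u)).trans (by omega)
  · exact (Nat.mul_le_mul_left _ (tdeg_XC 1 w)).trans (by omega)

def rotFun (p : P2) : (Fin 2 → ℝ) → (Fin 2 → ℝ) :=
  fun x => ![eval x (pderiv 1 p), -eval x (pderiv 0 p)]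

lemma rotFun_mem {ℓ : ℕ} {p : P2} (hp : p.totalDegree ≤ ℓ + 1) : rotFun p ∈ RolyF ℓ :=
  ⟨p, hp, fun x => ⟨by simp [rotFun], by simp [rotFun]⟩⟩

def cFun (xF : Fin 2 → ℝ) (q : P2) : (Fin 2 → ℝ) → (Fin 2 → ℝ) :=
  fun x j => (x j - xF j) * eval x q

lemma cFun_mem {ℓ : ℕ} {xF : Fin 2 → ℝ} {q : P2} (hq : q.totalDegree + 1 ≤ ℓ ∨ q = 0) :
    cFun xF q ∈ RolyCF ℓ xF :=
  ⟨q, hq, fun _ _ => rfl⟩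

lemma mon0 (ℓ : ℕ) (xF : Fin 2 → ℝ) (a b : ℕ) (hab : a + b ≤ ℓ) (t : ℝ) :
    ∃ r ∈ RolyF ℓ, ∃ c ∈ RolyCF ℓ xF,
      (fun (x : Fin 2 → ℝ) =>
        ![t * ((x 0 - xF 0)^a * (x 1 - xF 1)^b), 0]) = r + c := by
  have hk : ((a : ℝ) + (b : ℝ) + 1) ≠ 0 := by positivity
  set p : P2 := C (t/(a+b+1)) * ((X 0 - C (xF 0))^a * (X 1 - C (xF 1))^(b+1)) with hp
  set q : P2 := C (t*a/(a+b+1)) * ((X 0 - C (xF 0))^(a-1) * (X 1 - C (xF 1))^b) with hq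
  refine ⟨rotFun p, rotFun_mem ?_, cFun xF q, cFun_mem ?_, ?_⟩
  · refine (totalDegree_mul _ _).trans ?_
    rw [totalDegree_C, zero_add]
    exact (tdeg_prod _ _ a (b+1)).trans (by omega)
  · rcases Nat.eq_zero_or_pos a with ha | ha
    · right; simp [hq, ha]
    · left
      have h1 : q.totalDegree ≤ (a-1) + b := by
        refine (totalDegree_mul _ _).trans ?_
        rw [totalDegree_C, zero_add]
        exact tdeg_prod _ _ _ _
      omega
  · funext x j
    have hev1 : eval x (pderiv 1 p)
        = t/(a+b+1) * ((b+1) * ((x 0 - xF 0)^a * (x 1 - xF 1)^b)) := by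
      rw [hp, pderiv_C_mul, pderiv1_prod]; simp
    have hev0 : eval x (pderiv 0 p)
        = t/(a+b+1) * (a * ((x 0 - xF 0)^(a-1) * (x 1 - xF 1)^(b+1))) := by
      rw [hp, pderiv_C_mul, pderiv0_prod]; simp
    have hevq : eval x q = t*a/(a+b+1) * ((x 0 - xF 0)^(a-1) * (x 1 - xF 1)^b) := by
      rw [hq]; simp
    have hcf : ∀ j, cFun xF q x j = (x j - xF j) * eval x q := fun _ => rfl
    fin_cases j
    · show _ = rotFun p x 0 + cFun xF q x 0
      rw [rotFun, hcf, hevq]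
      simp only [Fin.mk_zero, Matrix.cons_val_zero, hev1]
      rcases Nat.eq_zero_or_pos a with ha | ha
      · subst ha
        push_cast
        field_simp
        ring
      · have hpow : (x 0 - xF 0)^a = (x 0 - xF 0) * (x 0 - xF 0)^(a-1) := by
          rw [← pow_succ']
          congr 1
          omega
        rw [hpow]
        field_simp
        ring
    · show _ = rotFun p x 1 + cFun xF q x 1
      rw [rotFun, hcf, hevq]
      simp only [Fin.mk_one, Matrix.cons_val_one, Matrix.head_cons, Matrix.cons_val_zero, hev0]
      have hpow : (x 1 - xF 1)^(b+1) = (x 1 - xF 1)^b * (x 1 - xF 1) := pow_succ _ _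
      rw [hpow]
      ring

lemma mon1 (ℓ : ℕ) (xF : Fin 2 → ℝ) (a b : ℕ) (hab : a + b ≤ ℓ) (t : ℝ) :
    ∃ r ∈ RolyF ℓ, ∃ c ∈ RolyCF ℓ xF,
      (fun (x : Fin 2 → ℝ) =>
        ![0, t * ((x 0 - xF 0)^a * (x 1 - xF 1)^b)]) = r + c := by
  have hk : ((a : ℝ) + (b : ℝ) + 1) ≠ 0 := by positivity
  set p : P2 := C (-t/(a+b+1)) * ((X 0 - C (xF 0))^(a+1) * (X 1 - C (xF 1))^b) with hp
  set q : P2 := C (t*b/(a+b+1)) * ((X 0 - C (xF 0))^a * (X 1 - C (xF 1))^(b-1)) with hq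
  refine ⟨rotFun p, rotFun_mem ?_, cFun xF q, cFun_mem ?_, ?_⟩
  · refine (totalDegree_mul _ _).trans ?_
    rw [totalDegree_C, zero_add]
    exact (tdeg_prod _ _ (a+1) b).trans (by omega)
  · rcases Nat.eq_zero_or_pos b with hb | hb
    · right; simp [hq, hb]
    · left
      have h1 : q.totalDegree ≤ a + (b-1) := by
        refine (totalDegree_mul _ _).trans ?_
        rw [totalDegree_C, zero_add]
        exact tdeg_prod _ _ _ _
      omega
  · funext x j
    have hev1 : eval x (pderiv 1 p)
        = -t/(a+b+1) * (b * ((x 0 - xF 0)^(a+1) * (x 1 - xF 1)^(b-1))) := by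
      rw [hp, pderiv_C_mul, pderiv1_prod]; simp
    have hev0 : eval x (pderiv 0 p)
        = -t/(a+b+1) * ((a+1) * ((x 0 - xF 0)^a * (x 1 - xF 1)^b)) := by
      rw [hp, pderiv_C_mul, pderiv0_prod]; push_cast; simp
    have hevq : eval x q = t*b/(a+b+1) * ((x 0 - xF 0)^a * (x 1 - xF 1)^(b-1)) := by
      rw [hq]; simp
    have hcf : ∀ j, cFun xF q x j = (x j - xF j) * eval x q := fun _ => rfl
    fin_cases j
    · show _ = rotFun p x 0 + cFun xF q x 0
      rw [rotFun, hcf, hevq]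
      simp only [Fin.mk_zero, Matrix.cons_val_zero, hev1]
      have hpow : (x 0 - xF 0)^(a+1) = (x 0 - xF 0)^a * (x 0 - xF 0) := pow_succ _ _
      rw [hpow]
      ring
    · show _ = rotFun p x 1 + cFun xF q x 1
      rw [rotFun, hcf, hevq]
      simp only [Fin.mk_one, Matrix.cons_val_one, Matrix.head_cons, Matrix.cons_val_zero, hev0]
      rcases Nat.eq_zero_or_pos b with hb | hb
      · subst hb
        push_cast
        field_simp
        ring
      · have hpow : (x 1 - xF 1)^b = (x 1 - xF 1) * (x 1 - xF 1)^(b-1) := by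
          rw [← pow_succ']
          congr 1
          omega
        rw [hpow]
        field_simp
        ring

lemma RolyF_add {ℓ : ℕ} {r r' : (Fin 2 → ℝ) → (Fin 2 → ℝ)}
    (h : r ∈ RolyF ℓ) (h' : r' ∈ RolyF ℓ) : r + r' ∈ RolyF ℓ := by
  obtain ⟨p, hp, he⟩ := h
  obtain ⟨p', hp', he'⟩ := h'
  refine ⟨p + p', (totalDegree_add _ _).trans (max_le hp hp'), fun x => ⟨?_, ?_⟩⟩
  · simp [Pi.add_apply, (he x).1, (he' x).1]
  · simp only [Pi.add_apply, (he x).2, (he' x).2, map_add, eval_add]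
    ring

lemma RolyCF_add {ℓ : ℕ} {xF : Fin 2 → ℝ} {c c' : (Fin 2 → ℝ) → (Fin 2 → ℝ)}
    (h : c ∈ RolyCF ℓ xF) (h' : c' ∈ RolyCF ℓ xF) : c + c' ∈ RolyCF ℓ xF := by
  obtain ⟨q, hq, he⟩ := h
  obtain ⟨q', hq', he'⟩ := h'
  refine ⟨q + q', ?_, fun x i => by simp only [Pi.add_apply, he x i, he' x i, eval_add]; ring⟩
  rcases hq with hq | rfl
  · rcases hq' with hq' | rfl
    · left
      have h2 := totalDegree_add q q'
      omega
    · left; simpa using hq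
  · rcases hq' with hq' | rfl
    · left; simpa using hq'
    · right; simp

def SS (ℓ : ℕ) (xF : Fin 2 → ℝ) : Set ((Fin 2 → ℝ) → (Fin 2 → ℝ)) :=
  {v | ∃ r ∈ RolyF ℓ, ∃ c ∈ RolyCF ℓ xF, v = r + c}

lemma SS_add {ℓ : ℕ} {xF : Fin 2 → ℝ} {v v' : (Fin 2 → ℝ) → (Fin 2 → ℝ)}
    (h : v ∈ SS ℓ xF) (h' : v' ∈ SS ℓ xF) : v + v' ∈ SS ℓ xF := by
  obtain ⟨r, hr, c, hc, rfl⟩ := h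
  obtain ⟨r', hr', c', hc', rfl⟩ := h'
  exact ⟨r + r', RolyF_add hr hr', c + c', RolyCF_add hc hc', by abel⟩

lemma SS_zero (ℓ : ℕ) (xF : Fin 2 → ℝ) : (0 : (Fin 2 → ℝ) → (Fin 2 → ℝ)) ∈ SS ℓ xF := by
  refine ⟨rotFun 0, rotFun_mem (by simp), cFun xF 0, cFun_mem (Or.inr rfl), ?_⟩
  funext x j
  fin_cases j <;> simp [rotFun, cFun]

/-! ### Sums of shifted monomial fields -/

lemma sum_mon0_mem (ℓ : ℕ) (xF : Fin 2 → ℝ) (co : (Fin 2 →₀ ℕ) → ℝ)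
    (s : Finset (Fin 2 →₀ ℕ)) (hs : ∀ α ∈ s, α 0 + α 1 ≤ ℓ) :
    (fun (x : Fin 2 → ℝ) =>
      ![∑ α ∈ s, co α * ((x 0 - xF 0)^(α 0) * (x 1 - xF 1)^(α 1)), 0]) ∈ SS ℓ xF := by
  classical
  induction s using Finset.induction_on with
  | empty =>
      refine Set.mem_of_eq_of_mem ?_ (SS_zero ℓ xF)
      funext x j
      fin_cases j <;> simp
  | insert a s' hni ih =>
      have hsplit : (fun (x : Fin 2 → ℝ) =>
          ![∑ α ∈ insert a s', co α * ((x 0 - xF 0)^(α 0) * (x 1 - xF 1)^(α 1)), 0])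
        = (fun (x : Fin 2 → ℝ) =>
            ![co a * ((x 0 - xF 0)^(a 0) * (x 1 - xF 1)^(a 1)), 0])
          + (fun (x : Fin 2 → ℝ) =>
            ![∑ α ∈ s', co α * ((x 0 - xF 0)^(α 0) * (x 1 - xF 1)^(α 1)), 0]) := by
        funext x j
        fin_cases j <;> simp [Finset.sum_insert hni]
      rw [hsplit]
      exact SS_add (mon0 ℓ xF (a 0) (a 1) (hs a (Finset.mem_insert_self a s')) (co a))
        (ih fun α hα => hs α (Finset.mem_insert_of_mem hα))

lemma sum_mon1_mem (ℓ : ℕ) (xF : Fin 2 → ℝ) (co : (Fin 2 →₀ ℕ) → ℝ)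
    (s : Finset (Fin 2 →₀ ℕ)) (hs : ∀ α ∈ s, α 0 + α 1 ≤ ℓ) :
    (fun (x : Fin 2 → ℝ) =>
      ![0, ∑ α ∈ s, co α * ((x 0 - xF 0)^(α 0) * (x 1 - xF 1)^(α 1))]) ∈ SS ℓ xF := by
  classical
  induction s using Finset.induction_on with
  | empty =>
      refine Set.mem_of_eq_of_mem ?_ (SS_zero ℓ xF)
      funext x j
      fin_cases j <;> simp
  | insert a s' hni ih =>
      have hsplit : (fun (x : Fin 2 → ℝ) =>
          ![0, ∑ α ∈ insert a s', co α * ((x 0 - xF 0)^(α 0) * (x 1 - xF 1)^(α 1))])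
        = (fun (x : Fin 2 → ℝ) =>
            ![0, co a * ((x 0 - xF 0)^(a 0) * (x 1 - xF 1)^(a 1))])
          + (fun (x : Fin 2 → ℝ) =>
            ![0, ∑ α ∈ s', co α * ((x 0 - xF 0)^(α 0) * (x 1 - xF 1)^(α 1))]) := by
        funext x j
        fin_cases j <;> simp [Finset.sum_insert hni]
      rw [hsplit]
      exact SS_add (mon1 ℓ xF (a 0) (a 1) (hs a (Finset.mem_insert_self a s')) (co a))
        (ih fun α hα => hs α (Finset.mem_insert_of_mem hα))

/-- Every polynomial component function of degree ≤ ℓ, placed in slot 0, lies in `SS`. -/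
lemma comp0_mem (ℓ : ℕ) (xF : Fin 2 → ℝ) (g : P2) (hg : g.totalDegree ≤ ℓ) :
    (fun (x : Fin 2 → ℝ) => ![eval x g, 0]) ∈ SS ℓ xF := by
  set G : P2 := aeval (fun j => X j + C (xF j)) g with hG
  have hrep : ∀ x : Fin 2 → ℝ,
      eval x g = ∑ α ∈ G.support, coeff α G * ((x 0 - xF 0)^(α 0) * (x 1 - xF 1)^(α 1)) := by
    intro x
    conv_lhs => rw [← aeval_sub_add xF g]
    rw [eval_aeval', eval_eq']
    refine Finset.sum_congr rfl fun α _ => ?_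
    rw [Fin.prod_univ_two]
    simp only [map_sub, eval_X, eval_C]
    rfl
  have hfun : (fun (x : Fin 2 → ℝ) => ![eval x g, 0])
      = (fun (x : Fin 2 → ℝ) =>
          ![∑ α ∈ G.support, coeff α G * ((x 0 - xF 0)^(α 0) * (x 1 - xF 1)^(α 1)), 0]) := by
    funext x
    rw [hrep x]
  rw [hfun]
  exact sum_mon0_mem ℓ xF _ _ ((tdeg_iff G ℓ).mp ((tdeg_aeval_add xF g).trans hg))

lemma comp1_mem (ℓ : ℕ) (xF : Fin 2 → ℝ) (g : P2) (hg : g.totalDegree ≤ ℓ) :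
    (fun (x : Fin 2 → ℝ) => ![0, eval x g]) ∈ SS ℓ xF := by
  set G : P2 := aeval (fun j => X j + C (xF j)) g with hG
  have hrep : ∀ x : Fin 2 → ℝ,
      eval x g = ∑ α ∈ G.support, coeff α G * ((x 0 - xF 0)^(α 0) * (x 1 - xF 1)^(α 1)) := by
    intro x
    conv_lhs => rw [← aeval_sub_add xF g]
    rw [eval_aeval', eval_eq']
    refine Finset.sum_congr rfl fun α _ => ?_
    rw [Fin.prod_univ_two]
    simp only [map_sub, eval_X, eval_C]
    rfl
  have hfun : (fun (x : Fin 2 → ℝ) => ![0, eval x g])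
      = (fun (x : Fin 2 → ℝ) =>
          ![0, ∑ α ∈ G.support, coeff α G * ((x 0 - xF 0)^(α 0) * (x 1 - xF 1)^(α 1))]) := by
    funext x
    rw [hrep x]
  rw [hfun]
  exact sum_mon1_mem ℓ xF _ _ ((tdeg_iff G ℓ).mp ((tdeg_aeval_add xF g).trans hg))

/-! ### The reverse inclusion -/

lemma mem_Pvec {ℓ : ℕ} {xF : Fin 2 → ℝ} {r c : (Fin 2 → ℝ) → (Fin 2 → ℝ)}
    (hr : r ∈ RolyF ℓ) (hc : c ∈ RolyCF ℓ xF) : r + c ∈ PvecF ℓ := by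
  obtain ⟨p, hp, he⟩ := hr
  obtain ⟨q, hq, he'⟩ := hc
  have hd : ∀ j : Fin 2, ((X j - C (xF j)) * q : P2).totalDegree ≤ ℓ := by
    intro j
    rcases hq with hq | rfl
    · refine (totalDegree_mul _ _).trans ?_
      have := tdeg_XC j (xF j)
      omega
    · simp
  have hpd : ∀ j : Fin 2, (pderiv j p : P2).totalDegree ≤ ℓ := fun j => tdeg_pderiv_le j p hp
  refine ⟨![pderiv 1 p + (X 0 - C (xF 0)) * q, -pderiv 0 p + (X 1 - C (xF 1)) * q],
    ?_, ?_⟩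
  · intro i
    fin_cases i
    · simp only [Fin.mk_zero, Matrix.cons_val_zero]
      exact (totalDegree_add _ _).trans (max_le (hpd 1) (hd 0))
    · simp only [Fin.mk_one, Matrix.cons_val_one, Matrix.head_cons]
      refine (totalDegree_add _ _).trans (max_le ?_ (hd 1))
      rw [totalDegree_neg]
      exact hpd 0
  · intro x i
    fin_cases i
    · simp only [Fin.mk_zero, Matrix.cons_val_zero, Pi.add_apply, (he x).1, he' x 0,
        eval_add, eval_mul, map_sub, eval_X, eval_C]
    · simp only [Fin.mk_one, Matrix.cons_val_one, Matrix.head_cons, Matrix.cons_val_zero, Pi.add_apply, (he x).2,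
        he' x 1, eval_add, eval_mul, map_sub, eval_X, eval_C, eval_neg]

/-! ### Uniqueness -/

lemma unique_decomp {ℓ : ℕ} {xF : Fin 2 → ℝ} {r r' c c' : (Fin 2 → ℝ) → (Fin 2 → ℝ)}
    (hr : r ∈ RolyF ℓ) (hr' : r' ∈ RolyF ℓ) (hc : c ∈ RolyCF ℓ xF) (hc' : c' ∈ RolyCF ℓ xF)
    (h : r + c = r' + c') : r = r' ∧ c = c' := by
  obtain ⟨p, hp, he⟩ := hr
  obtain ⟨p', hp', he'⟩ := hr'
  obtain ⟨q, hq, hf⟩ := hc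
  obtain ⟨q', hq', hf'⟩ := hc'
  set D : P2 := p - p' with hD
  set Q : P2 := q - q' with hQ
  have E1 : pderiv 1 D + (X 0 - C (xF 0)) * Q = 0 := by
    apply MvPolynomial.funext
    intro x
    have hx := congrFun (congrFun h x) 0
    simp only [Pi.add_apply, (he x).1, (he' x).1, hf x 0, hf' x 0] at hx
    simp only [hD, hQ, map_sub, eval_add, eval_mul, eval_sub, eval_X, eval_C, map_zero]
    linear_combination hx
  have E2 : pderiv 0 D = (X 1 - C (xF 1)) * Q := by
    apply MvPolynomial.funext
    intro x
    have hx := congrFun (congrFun h x) 1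
    simp only [Pi.add_apply, (he x).2, (he' x).2, hf x 1, hf' x 1] at hx
    simp only [hD, hQ, map_sub, eval_mul, eval_sub, eval_X, eval_C]
    linear_combination -hx
  have E1' : pderiv 1 D = -((X 0 - C (xF 0)) * Q) := by linear_combination E1
  have E3' : (X 0 - C (xF 0) : P2) * pderiv 0 D + (X 1 - C (xF 1)) * pderiv 1 D = 0 := by
    rw [E1', E2]
    ring
  have hT : ∀ (g : P2) (j : Fin 2),
      aeval (fun i => X i + C (xF i)) ((X j - C (xF j)) * g)
        = X j * aeval (fun i => X i + C (xF i)) g := by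
    intro g j
    rw [map_mul]
    congr 1
    rw [map_sub, aeval_X, aeval_C, algebraMap_eq, add_sub_cancel_right]
  have E3 : (X 0 : P2) * pderiv 0 (aeval (fun i => X i + C (xF i)) D)
      + (X 1 : P2) * pderiv 1 (aeval (fun i => X i + C (xF i)) D) = 0 := by
    have h3 := congrArg (aeval (fun i => X i + C (xF i))) E3'
    rw [map_add, hT, hT, map_zero, ← pderiv_aeval_add, ← pderiv_aeval_add] at h3
    exact h3
  have hpd1 : pderiv 1 D = 0 := by
    have h1 := euler_vanish _ E3 1
    rw [pderiv_aeval_add] at h1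
    have h2 := congrArg (aeval (fun j => X j - C (xF j))) h1
    rwa [aeval_sub_add, map_zero] at h2
  have hQ0 : Q = 0 := by
    rw [hpd1, zero_add] at E1
    rcases mul_eq_zero.mp E1 with hX | hQ0
    · exfalso
      have h4 := congrArg (eval (fun _ => xF 0 + 1)) hX
      simp at h4
    · exact hQ0
  have hqq : q = q' := sub_eq_zero.mp hQ0
  have hcc : c = c' := by
    funext x i
    rw [hf x i, hf' x i, hqq]
  refine ⟨?_, hcc⟩
  have h5 : r + c = r' + c := by rw [h, hcc]
  exact add_right_cancel h5

end PvecAux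

/-- Direct decomposition `P^ℓ(F)² = R^ℓ(F) ⊕ R^{c,ℓ}(F)`. -/
theorem Pvec_direct_sum_Roly_RolyC (ℓ : ℕ) (xF : Fin 2 → ℝ) :
    (∀ v, v ∈ PvecF ℓ ↔ ∃ r ∈ RolyF ℓ, ∃ c ∈ RolyCF ℓ xF, v = r + c) ∧
    (∀ r r' c c', r ∈ RolyF ℓ → r' ∈ RolyF ℓ → c ∈ RolyCF ℓ xF → c' ∈ RolyCF ℓ xF →
      r + c = r' + c' → r = r' ∧ c = c') := by
  constructor
  · intro v
    constructor
    · rintro ⟨p, hdeg, hv⟩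
      have hsplit : v = (fun x => ![eval x (p 0), 0]) + (fun x => ![0, eval x (p 1)]) := by
        funext x j
        fin_cases j
        · show v x 0 = _
          rw [hv x 0]
          simp
        · show v x 1 = _
          rw [hv x 1]
          simp
      rw [hsplit]
      exact SS_add (comp0_mem ℓ xF (p 0) (hdeg 0)) (comp1_mem ℓ xF (p 1) (hdeg 1))
    · rintro ⟨r, hr, c, hc, rfl⟩
      exact mem_Pvec hr hc
  · intro r r' c c' hr hr' hc hc' h
    exact unique_decomp hr hr' hc hc' h
end

section
/- Let T ⊂ ℝ³ be open with a marked point x_T and ℓ ≥ 0 an integer. Then the space of ℝ³-valued polynomials of total degree ≤ ℓ decomposes as P^ℓ(T)³ = G^ℓ(T) ⊕ G^{c,ℓ}(T), where G^ℓ(T) = grad P^{ℓ+1}(T) and G^{c,ℓ}(T) = (x - x_T) × P^{ℓ-1}(T)³. -/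
open MvPolynomial

/-- ℝ³-valued polynomials of total degree ≤ ℓ on an element `T ⊂ ℝ³`. -/
def PvecT (ℓ : ℕ) : Set ((Fin 3 → ℝ) → (Fin 3 → ℝ)) :=
  {v | ∃ p : Fin 3 → MvPolynomial (Fin 3) ℝ,
    (∀ i, (p i).totalDegree ≤ ℓ) ∧ ∀ x i, v x i = eval x (p i)}

/-- `G^ℓ(T) = grad P^{ℓ+1}(T)`. -/
def GolyT (ℓ : ℕ) : Set ((Fin 3 → ℝ) → (Fin 3 → ℝ)) :=
  {v | ∃ p : MvPolynomial (Fin 3) ℝ, p.totalDegree ≤ ℓ + 1 ∧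
    ∀ x i, v x i = eval x (pderiv i p)}

/-- `G^{c,ℓ}(T) = (x - x_T) × P^{ℓ-1}(T)³`, with the convention `P^{-1} = {0}`. -/
def GolyCT (ℓ : ℕ) (xT : Fin 3 → ℝ) : Set ((Fin 3 → ℝ) → (Fin 3 → ℝ)) :=
  {v | ∃ w : Fin 3 → MvPolynomial (Fin 3) ℝ,
    ((∀ i, (w i).totalDegree + 1 ≤ ℓ) ∨ (∀ i, w i = 0)) ∧
    ∀ x, v x = crossProduct (fun i => x i - xT i) (fun i => eval x (w i))}

/-! ### Auxiliary machinery -/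

noncomputable section PvecAux

abbrev MP := MvPolynomial (Fin 3) ℝ

lemma sum_fin3 (d : Fin 3 →₀ ℕ) : (d.sum fun _ e => e) = d 0 + d 1 + d 2 := by
  have : (d.sum fun _ e => e) = ∑ i : Fin 3, d i :=
    Finset.sum_subset (Finset.subset_univ _)
      (fun i _ hi => Finsupp.notMem_support_iff.mp hi)
  rw [this, Fin.sum_univ_three]

lemma degree_fin3 (d : Fin 3 →₀ ℕ) : d.degree = d 0 + d 1 + d 2 := by
  have : d.degree = ∑ i : Fin 3, d i :=
    Finset.sum_subset (Finset.subset_univ _)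
      (fun i _ hi => Finsupp.notMem_support_iff.mp hi)
  rw [this, Fin.sum_univ_three]

lemma Eterm (s : Fin 3 →₀ ℕ) (a : ℝ) (i : Fin 3) :
    X i * pderiv i (monomial s a) = monomial s (a * (s i : ℝ)) := by
  rw [pderiv_monomial]
  by_cases h : s i = 0
  · simp [h]
  · have hs : Finsupp.single i 1 + (s - Finsupp.single i 1) = s := by
      ext j
      rw [Finsupp.add_apply, Finsupp.tsub_apply, Finsupp.single_apply]
      rcases eq_or_ne i j with rfl | hij
      · simp only [eq_self_iff_true, if_true]; omega
      · simp [hij]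
    have hX : (X i : MP) = monomial (Finsupp.single i 1) 1 := by
      rw [MvPolynomial.X]
    rw [hX, monomial_mul, one_mul, hs]

lemma Emon (s : Fin 3 →₀ ℕ) (a : ℝ) :
    X 0 * pderiv 0 (monomial s a) + X 1 * pderiv 1 (monomial s a)
      + X 2 * pderiv 2 (monomial s a)
      = monomial s (a * ((s 0 : ℝ) + s 1 + s 2)) := by
  rw [Eterm, Eterm, Eterm, ← map_add, ← map_add]
  congr 1
  ring

lemma coeff_E (q : MP) (d : Fin 3 →₀ ℕ) :
    coeff d (X 0 * pderiv 0 q + X 1 * pderiv 1 q + X 2 * pderiv 2 q)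
      = ((d 0 : ℝ) + d 1 + d 2) * coeff d q := by
  induction q using MvPolynomial.induction_on' with
  | monomial s a =>
    rw [Emon, coeff_monomial, coeff_monomial]
    split
    · next h => subst h; ring
    · ring
  | add p q hp hq =>
    simp only [map_add, mul_add, coeff_add] at *
    linear_combination hp + hq

lemma euler {m : ℕ} {q : MP} (h : q.IsHomogeneous m) :
    X 0 * pderiv 0 q + X 1 * pderiv 1 q + X 2 * pderiv 2 q = C (m : ℝ) * q := by
  ext d
  rw [coeff_E, coeff_C_mul]
  by_cases hd : coeff d q = 0
  · rw [hd, mul_zero, mul_zero]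
  · have h1 := h hd
    replace h1 : d.degree = m := by rw [Finsupp.degree_eq_weight_one]; exact h1
    rw [degree_fin3] at h1
    congr 1
    push_cast [← h1]
    ring

lemma grad_zero {q : MP}
    (h : X 0 * pderiv 0 q + X 1 * pderiv 1 q + X 2 * pderiv 2 q = 0) :
    ∀ i, pderiv i q = 0 := by
  have hq : q = C (coeff 0 q) := by
    ext d
    by_cases hd : d = 0
    · subst hd; simp
    · have h2 := coeff_E q d
      rw [h, coeff_zero] at h2
      have hdeg : d 0 + d 1 + d 2 ≠ 0 := by
        intro hc
        apply hd
        have h0 : d 0 = 0 ∧ d 1 = 0 ∧ d 2 = 0 := by omega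
        ext j
        fin_cases j
        · simpa using h0.1
        · simpa using h0.2.1
        · simpa using h0.2.2
      have hne : ((d 0 : ℝ) + d 1 + d 2) ≠ 0 := by
        exact_mod_cast fun hc => hdeg (by exact_mod_cast hc)
      rw [coeff_C, if_neg (Ne.symm hd)]
      exact (mul_eq_zero.mp h2.symm).resolve_left hne
  intro i
  rw [hq, pderiv_C]

lemma totalDegree_pderiv_le' (q : MP) (i : Fin 3) (n : ℕ)
    (h : q.totalDegree ≤ n + 1) : (pderiv i q).totalDegree ≤ n := by
  conv_lhs => rw [q.as_sum]
  rw [map_sum]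
  refine (totalDegree_finset_sum _ _).trans (Finset.sup_le fun s hs => ?_)
  rw [pderiv_monomial]
  by_cases hsi : s i = 0
  · simp [hsi]
  · refine (totalDegree_monomial_le _ _).trans ?_
    have hsum : s 0 + s 1 + s 2 ≤ n + 1 := by
      rw [← sum_fin3]
      exact le_trans (le_totalDegree hs) h
    show ((s - Finsupp.single i 1).sum fun _ e => e) ≤ n
    rw [sum_fin3 (s - Finsupp.single i 1)]
    simp only [Finsupp.tsub_apply]
    fin_cases i <;> simp [Finsupp.single_apply] at hsi ⊢ <;> omega

/-! ### Translation (shift) of polynomials -/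

def shiftP (a : Fin 3 → ℝ) (q : MP) : MP :=
  bind₁ (fun j => X j + C (a j)) q

lemma eval_shiftP (a : Fin 3 → ℝ) (q : MP) (x : Fin 3 → ℝ) :
    eval x (shiftP a q) = eval (fun j => x j + a j) q := by
  induction q using MvPolynomial.induction_on with
  | C c => simp [shiftP]
  | add p q hp hq =>
    simp only [shiftP] at hp hq ⊢; rw [map_add, map_add, map_add, hp, hq]
  | mul_X p j hp =>
    simp only [shiftP] at hp ⊢
    rw [map_mul, bind₁_X_right, map_mul, eval_mul, hp]
    simp

lemma shiftP_shiftP (a b : Fin 3 → ℝ) (q : MP) :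
    shiftP b (shiftP a q) = shiftP (fun j => a j + b j) q := by
  unfold shiftP
  rw [bind₁_bind₁]
  have hfun : (fun i : Fin 3 => bind₁ (fun j => (X j : MP) + C (b j)) (X i + C (a i)))
      = fun j : Fin 3 => (X j : MP) + C (a j + b j) := by
    funext j
    rw [map_add, bind₁_X_right, bind₁_C_right, map_add]
    ring
  rw [hfun]

lemma shiftP_neg_shiftP (a : Fin 3 → ℝ) (q : MP) :
    shiftP (fun j => -a j) (shiftP a q) = q := by
  rw [shiftP_shiftP]
  have : (fun j => a j + -a j) = fun _ => (0 : ℝ) := by funext j; ring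
  rw [this]
  unfold shiftP
  simp only [map_zero, add_zero]
  rw [show (fun j : Fin 3 => (X j : MP)) = X from rfl, bind₁_X_left]
  rfl

lemma shiftP_inj {a : Fin 3 → ℝ} {p q : MP} (h : shiftP a p = shiftP a q) : p = q := by
  have := congrArg (shiftP (fun j => -a j)) h
  rwa [shiftP_neg_shiftP, shiftP_neg_shiftP] at this

lemma pderiv_shiftP (a : Fin 3 → ℝ) (i : Fin 3) (q : MP) :
    pderiv i (shiftP a q) = shiftP a (pderiv i q) := by
  induction q using MvPolynomial.induction_on with
  | C c => simp [shiftP]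
  | add p q hp hq =>
    simp only [shiftP] at hp hq ⊢
    rw [map_add, map_add, map_add, map_add, hp, hq]
  | mul_X p j hp =>
    have e1 : shiftP a (p * X j) = shiftP a p * (X j + C (a j)) := by
      simp only [shiftP]; rw [map_mul, bind₁_X_right]
    rw [e1, pderiv_mul, hp, pderiv_mul]
    rcases eq_or_ne i j with rfl | hij
    · rw [pderiv_X_self, mul_one]
      have e2 : shiftP a (pderiv i p * X i + p) = shiftP a (pderiv i p) * (X i + C (a i))
          + shiftP a p := by
        simp only [shiftP]; rw [map_add, map_mul, bind₁_X_right]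
      rw [e2]
      have e3 : pderiv i ((X i : MP) + C (a i)) = 1 := by
        rw [map_add, pderiv_X_self, pderiv_C, add_zero]
      rw [e3, mul_one]
    · have h1 : pderiv i ((X j : MP)) = 0 := pderiv_X_of_ne (Ne.symm hij)
      have h2 : pderiv i ((X j : MP) + C (a j)) = 0 := by simp [h1]
      rw [h1, h2, mul_zero, add_zero, mul_zero, add_zero]
      simp only [shiftP]; rw [map_mul, bind₁_X_right]

lemma totalDegree_shiftP_le (a : Fin 3 → ℝ) (q : MP) :
    (shiftP a q).totalDegree ≤ q.totalDegree := by
  conv_lhs => rw [q.as_sum]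
  unfold shiftP
  rw [map_sum]
  refine (totalDegree_finset_sum _ _).trans (Finset.sup_le fun s hs => ?_)
  rw [monomial_eq, map_mul, bind₁_C_right]
  calc (C (coeff s q) * bind₁ (fun j => X j + C (a j)) (s.prod fun n e => X n ^ e)).totalDegree
      ≤ (C (coeff s q) : MP).totalDegree
        + (bind₁ (fun j => X j + C (a j)) (s.prod fun n e => X n ^ e)).totalDegree :=
        totalDegree_mul _ _
    _ ≤ s.sum fun _ e => e := by
        rw [totalDegree_C, zero_add, Finsupp.prod, map_prod, Finsupp.sum]
        refine (totalDegree_finset_prod _ _).trans ?_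
        refine Finset.sum_le_sum fun j hj => ?_
        rw [map_pow]
        refine (totalDegree_pow _ _).trans ?_
        have h1 : (bind₁ (fun j => X j + C (a j)) (X j) : MP).totalDegree ≤ 1 := by
          rw [bind₁_X_right]
          refine (totalDegree_add _ _).trans ?_
          simp [totalDegree_X, totalDegree_C]
        exact Nat.mul_le_mul_left _ h1 |>.trans (by omega)
    _ ≤ q.totalDegree := le_totalDegree hs

/-! ### Polynomial curl and cross product -/

def curlP (u : Fin 3 → MP) : Fin 3 → MP :=
  ![pderiv 1 (u 2) - pderiv 2 (u 1),
    pderiv 2 (u 0) - pderiv 0 (u 2),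
    pderiv 0 (u 1) - pderiv 1 (u 0)]

def crossP (u v : Fin 3 → MP) : Fin 3 → MP :=
  ![u 1 * v 2 - u 2 * v 1, u 2 * v 0 - u 0 * v 2, u 0 * v 1 - u 1 * v 0]

lemma eval_crossP (x : Fin 3 → ℝ) (u v : Fin 3 → MP) (i : Fin 3) :
    eval x (crossP u v i)
      = crossProduct (fun j => eval x (u j)) (fun j => eval x (v j)) i := by
  fin_cases i <;> simp [crossP, cross_apply]

lemma eval_crossP_sub (x a : Fin 3 → ℝ) (w : Fin 3 → MP) (i : Fin 3) :
    eval x (crossP (fun j => X j - C (a j)) w i)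
      = crossProduct (fun j => x j - a j) (fun k => eval x (w k)) i := by
  rw [eval_crossP]
  have : (fun j => eval x ((X j : MP) - C (a j))) = fun j => x j - a j := by
    funext j; simp
  rw [this]

lemma crossP_sub (A V W : Fin 3 → MP) (i : Fin 3) :
    crossP A (fun k => V k - W k) i = crossP A V i - crossP A W i := by
  fin_cases i
  · show A 1 * (V 2 - W 2) - A 2 * (V 1 - W 1)
      = (A 1 * V 2 - A 2 * V 1) - (A 1 * W 2 - A 2 * W 1); ring
  · show A 2 * (V 0 - W 0) - A 0 * (V 2 - W 2)
      = (A 2 * V 0 - A 0 * V 2) - (A 2 * W 0 - A 0 * W 2); ring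
  · show A 0 * (V 1 - W 1) - A 1 * (V 0 - W 0)
      = (A 0 * V 1 - A 1 * V 0) - (A 0 * W 1 - A 1 * W 0); ring

lemma crossP_C_mul (c : ℝ) (A V : Fin 3 → MP) (i : Fin 3) :
    crossP A (fun k => C c * V k) i = C c * crossP A V i := by
  fin_cases i
  · show A 1 * (C c * V 2) - A 2 * (C c * V 1) = C c * (A 1 * V 2 - A 2 * V 1); ring
  · show A 2 * (C c * V 0) - A 0 * (C c * V 2) = C c * (A 2 * V 0 - A 0 * V 2); ring
  · show A 0 * (C c * V 1) - A 1 * (C c * V 0) = C c * (A 0 * V 1 - A 1 * V 0); ring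

lemma crossP_sum (s : Finset ℕ) (A : Fin 3 → MP) (F : ℕ → Fin 3 → MP) (i : Fin 3) :
    crossP A (fun k => ∑ m ∈ s, F m k) i = ∑ m ∈ s, crossP A (F m) i := by
  fin_cases i
  · show A 1 * (∑ m ∈ s, F m 2) - A 2 * (∑ m ∈ s, F m 1)
      = ∑ m ∈ s, (A 1 * F m 2 - A 2 * F m 1)
    rw [Finset.mul_sum, Finset.mul_sum, ← Finset.sum_sub_distrib]
  · show A 2 * (∑ m ∈ s, F m 0) - A 0 * (∑ m ∈ s, F m 2)
      = ∑ m ∈ s, (A 2 * F m 0 - A 0 * F m 2)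
    rw [Finset.mul_sum, Finset.mul_sum, ← Finset.sum_sub_distrib]
  · show A 0 * (∑ m ∈ s, F m 1) - A 1 * (∑ m ∈ s, F m 0)
      = ∑ m ∈ s, (A 0 * F m 1 - A 1 * F m 0)
    rw [Finset.mul_sum, Finset.mul_sum, ← Finset.sum_sub_distrib]

lemma shiftP_crossP_X (b : Fin 3 → ℝ) (V : Fin 3 → MP) (i : Fin 3) :
    shiftP b (crossP (fun j => X j) V i)
      = crossP (fun j => X j + C (b j)) (fun k => shiftP b (V k)) i := by
  fin_cases i
  · show shiftP b (X 1 * V 2 - X 2 * V 1) = _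
    simp only [shiftP]; rw [map_sub, map_mul, map_mul, bind₁_X_right, bind₁_X_right]; rfl
  · show shiftP b (X 2 * V 0 - X 0 * V 2) = _
    simp only [shiftP]; rw [map_sub, map_mul, map_mul, bind₁_X_right, bind₁_X_right]; rfl
  · show shiftP b (X 0 * V 1 - X 1 * V 0) = _
    simp only [shiftP]; rw [map_sub, map_mul, map_mul, bind₁_X_right, bind₁_X_right]; rfl

lemma totalDegree_crossP_le (a : Fin 3 → ℝ) (w : Fin 3 → MP) (n : ℕ)
    (hw : ∀ j, (w j).totalDegree ≤ n) (i : Fin 3) :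
    (crossP (fun j => X j - C (a j)) w i).totalDegree ≤ n + 1 := by
  have ht : ∀ j k : Fin 3, (((X j : MP) - C (a j)) * w k).totalDegree ≤ n + 1 := by
    intro j k
    refine (totalDegree_mul _ _).trans ?_
    have h1 : ((X j - C (a j) : MP)).totalDegree ≤ 1 :=
      (totalDegree_sub _ _).trans (max_le (le_of_eq (totalDegree_X j)) (by simp))
    have h2 := hw k
    omega
  fin_cases i <;> exact (totalDegree_sub _ _).trans (max_le (ht _ _) (ht _ _))

/-! ### The key homogeneous identity -/

lemma key {m : ℕ} {u : Fin 3 → MP} (hu : ∀ j, (u j).IsHomogeneous m) (i : Fin 3) :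
    pderiv i (X 0 * u 0 + X 1 * u 1 + X 2 * u 2)
      - crossP (fun j => X j) (curlP u) i = C ((m : ℝ) + 1) * u i := by
  have e0 := euler (hu 0)
  have e1 := euler (hu 1)
  have e2 := euler (hu 2)
  have px : ∀ i j : Fin 3, pderiv i ((X j : MP)) = if i = j then 1 else 0 := by
    intro i j
    rcases eq_or_ne i j with rfl | h
    · rw [pderiv_X_self, if_pos rfl]
    · rw [pderiv_X_of_ne (Ne.symm h), if_neg h]
  have hC : C ((m : ℝ) + 1) = (C (m : ℝ) + 1 : MP) := by rw [map_add, MvPolynomial.C_1]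
  fin_cases i
  · show pderiv 0 (X 0 * u 0 + X 1 * u 1 + X 2 * u 2)
        - (X 1 * (pderiv 0 (u 1) - pderiv 1 (u 0)) - X 2 * (pderiv 2 (u 0) - pderiv 0 (u 2)))
        = C ((m : ℝ) + 1) * u 0
    simp only [map_add, pderiv_mul, px, reduceIte, one_mul, zero_mul, mul_one, mul_zero,
      add_zero, zero_add, hC]
    rw [if_neg (show (0:Fin 3) ≠ 1 by decide), if_neg (show (0:Fin 3) ≠ 2 by decide)]
    linear_combination e0
  · show pderiv 1 (X 0 * u 0 + X 1 * u 1 + X 2 * u 2)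
        - (X 2 * (pderiv 1 (u 2) - pderiv 2 (u 1)) - X 0 * (pderiv 0 (u 1) - pderiv 1 (u 0)))
        = C ((m : ℝ) + 1) * u 1
    simp only [map_add, pderiv_mul, px, reduceIte, one_mul, zero_mul, mul_one, mul_zero,
      add_zero, zero_add, hC]
    rw [if_neg (show (1:Fin 3) ≠ 0 by decide), if_neg (show (1:Fin 3) ≠ 2 by decide)]
    linear_combination e1
  · show pderiv 2 (X 0 * u 0 + X 1 * u 1 + X 2 * u 2)
        - (X 0 * (pderiv 2 (u 0) - pderiv 0 (u 2)) - X 1 * (pderiv 1 (u 2) - pderiv 2 (u 1)))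
        = C ((m : ℝ) + 1) * u 2
    simp only [map_add, pderiv_mul, px, reduceIte, one_mul, zero_mul, mul_one, mul_zero,
      add_zero, zero_add, hC]
    rw [if_neg (show (2:Fin 3) ≠ 0 by decide), if_neg (show (2:Fin 3) ≠ 1 by decide)]
    linear_combination e2

open Finset in
lemma exists_decomp (ℓ : ℕ) (a : Fin 3 → ℝ) (p : Fin 3 → MP)
    (hdeg : ∀ i, (p i).totalDegree ≤ ℓ) :
    ∃ P w, (P : MP).totalDegree ≤ ℓ + 1 ∧
      ((∀ i, ((w : Fin 3 → MP) i).totalDegree + 1 ≤ ℓ) ∨ (∀ i, w i = 0)) ∧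
      ∀ i, p i = pderiv i P + crossP (fun j => X j - C (a j)) w i := by
  set u : Fin 3 → MP := fun i => shiftP a (p i) with hu
  have hudeg : ∀ i, (u i).totalDegree ≤ ℓ :=
    fun i => (totalDegree_shiftP_le _ _).trans (hdeg i)
  -- homogeneous components
  set hc : ℕ → Fin 3 → MP := fun m j => homogeneousComponent m (u j) with hhc
  have hcdeg : ∀ m j, (hc m j).totalDegree ≤ m :=
    fun m j => (homogeneousComponent_isHomogeneous m (u j)).totalDegree_le
  have hsum : ∀ i, ∑ m ∈ range (ℓ + 1), hc m i = u i := by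
    intro i
    have h1 := sum_homogeneousComponent (u i)
    have h2 : ∑ m ∈ range ((u i).totalDegree + 1), homogeneousComponent m (u i)
        = ∑ m ∈ range (ℓ + 1), homogeneousComponent m (u i) := by
      refine Finset.sum_subset (Finset.range_subset_range.mpr (by have := hudeg i; omega)) ?_
      intro m hm hm2
      simp only [Finset.mem_range, not_lt] at hm hm2
      exact homogeneousComponent_eq_zero _ _ (Nat.lt_of_succ_le hm2)
    rw [hhc]
    rw [← h2, h1]
  set φ : MP := ∑ m ∈ range (ℓ + 1), C (((m : ℝ) + 1)⁻¹) *
      (X 0 * hc m 0 + X 1 * hc m 1 + X 2 * hc m 2) with hφ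
  set ω : Fin 3 → MP := fun k => ∑ m ∈ range (ℓ + 1),
      C (-((m : ℝ) + 1)⁻¹) * curlP (hc m) k with hω
  -- the main polynomial identity in shifted coordinates
  have main : ∀ i, pderiv i φ + crossP (fun j => X j) ω i = u i := by
    intro i
    have hps : pderiv i φ = ∑ m ∈ range (ℓ + 1),
        C (((m : ℝ) + 1)⁻¹) * pderiv i (X 0 * hc m 0 + X 1 * hc m 1 + X 2 * hc m 2) := by
      rw [hφ, map_sum]
      exact Finset.sum_congr rfl fun m _ => pderiv_C_mul
    have hcs : crossP (fun j => X j) ω i = ∑ m ∈ range (ℓ + 1),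
        C (-((m : ℝ) + 1)⁻¹) * crossP (fun j => X j) (curlP (hc m)) i := by
      rw [hω, crossP_sum]
      exact Finset.sum_congr rfl fun m _ => crossP_C_mul _ _ _ _
    rw [hps, hcs, ← Finset.sum_add_distrib, ← hsum i]
    refine Finset.sum_congr rfl fun m _ => ?_
    have hk := key (fun j => homogeneousComponent_isHomogeneous m (u j)) i
    have hCC : (C (((m : ℝ) + 1)⁻¹) : MP) * C ((m : ℝ) + 1) = 1 := by
      rw [← map_mul, inv_mul_cancel₀ (by positivity), MvPolynomial.C_1]
    rw [map_neg]
    linear_combination (C (((m : ℝ) + 1)⁻¹) : MP) * hk + (hc m i) * hCC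
  -- degree of φ
  have hφdeg : φ.totalDegree ≤ ℓ + 1 := by
    rw [hφ]
    refine (totalDegree_finset_sum _ _).trans (Finset.sup_le fun m hm => ?_)
    refine (totalDegree_mul _ _).trans ?_
    rw [totalDegree_C, zero_add]
    have hterm : ∀ j : Fin 3, ((X j : MP) * hc m j).totalDegree ≤ ℓ + 1 := by
      intro j
      refine (totalDegree_mul _ _).trans ?_
      rw [totalDegree_X]
      have := hcdeg m j
      simp only [Finset.mem_range] at hm
      omega
    exact (totalDegree_add _ _).trans (max_le ((totalDegree_add _ _).trans
      (max_le (hterm 0) (hterm 1))) (hterm 2))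
  refine ⟨shiftP (fun j => -a j) φ, fun k => shiftP (fun j => -a j) (ω k),
    (totalDegree_shiftP_le _ _).trans hφdeg, ?_, ?_⟩
  · -- degree / vanishing of ω
    rcases Nat.eq_zero_or_pos ℓ with rfl | hl
    · right
      intro k
      have hω0 : ω k = 0 := by
        rw [hω]
        simp only [zero_add, Finset.sum_range_one]
        have hcurl : curlP (hc 0) k = 0 := by
          have hcc : ∀ j : Fin 3, hc 0 j = C (coeff 0 (u j)) := by
            intro j; rw [hhc]; exact homogeneousComponent_zero _
          fin_cases k
          · show pderiv 1 (hc 0 2) - pderiv 2 (hc 0 1) = 0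
            rw [hcc, hcc, pderiv_C, pderiv_C, sub_zero]
          · show pderiv 2 (hc 0 0) - pderiv 0 (hc 0 2) = 0
            rw [hcc, hcc, pderiv_C, pderiv_C, sub_zero]
          · show pderiv 0 (hc 0 1) - pderiv 1 (hc 0 0) = 0
            rw [hcc, hcc, pderiv_C, pderiv_C, sub_zero]
        rw [hcurl, mul_zero]
      show shiftP (fun j => -a j) (ω k) = 0
      rw [hω0, shiftP]
      exact map_zero _
    · left
      intro k
      have hωdeg : (ω k).totalDegree ≤ ℓ - 1 := by
        rw [hω]
        refine (totalDegree_finset_sum _ _).trans (Finset.sup_le fun m hm => ?_)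
        refine (totalDegree_mul _ _).trans ?_
        rw [totalDegree_C, zero_add]
        have hpd : ∀ j j' : Fin 3, (pderiv j' (hc m j)).totalDegree ≤ ℓ - 1 := by
          intro j j'
          refine totalDegree_pderiv_le' _ _ _ ?_
          refine (hcdeg m j).trans ?_
          simp only [Finset.mem_range] at hm
          omega
        fin_cases k <;> exact (totalDegree_sub _ _).trans (max_le (hpd _ _) (hpd _ _))
      show (shiftP (fun j => -a j) (ω k)).totalDegree + 1 ≤ ℓ
      have := (totalDegree_shiftP_le (fun j => -a j) (ω k)).trans hωdeg
      omega
  · -- the identity in original coordinates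
    intro i
    have h1 : p i = shiftP (fun j => -a j) (u i) := (shiftP_neg_shiftP a (p i)).symm
    have hadd : shiftP (fun j => -a j) (pderiv i φ + crossP (fun j => X j) ω i)
        = shiftP (fun j => -a j) (pderiv i φ)
          + shiftP (fun j => -a j) (crossP (fun j => X j) ω i) :=
      map_add (bind₁ fun j => X j + C (-a j)) _ _
    rw [h1, ← main i, hadd]
    congr 1
    · exact (pderiv_shiftP _ i φ).symm
    · rw [shiftP_crossP_X]
      have : (fun j : Fin 3 => (X j : MP) + C (-a j)) = fun j => X j - C (a j) := by
        funext j
        rw [map_neg, sub_eq_add_neg]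
      rw [this]

end PvecAux

/-- Direct decomposition `P^ℓ(T)³ = G^ℓ(T) ⊕ G^{c,ℓ}(T)`. -/
theorem Pvec_direct_sum_Goly_GolyC (ℓ : ℕ) (xT : Fin 3 → ℝ) :
    (∀ v, v ∈ PvecT ℓ ↔ ∃ g ∈ GolyT ℓ, ∃ c ∈ GolyCT ℓ xT, v = g + c) ∧
    (∀ g g' c c', g ∈ GolyT ℓ → g' ∈ GolyT ℓ → c ∈ GolyCT ℓ xT → c' ∈ GolyCT ℓ xT →
      g + c = g' + c' → g = g' ∧ c = c') := by
  constructor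
  · intro v
    constructor
    · rintro ⟨p, hdeg, heval⟩
      obtain ⟨P, w, hP, hw, hid⟩ := exists_decomp ℓ xT p hdeg
      refine ⟨fun x i => eval x (pderiv i P), ⟨P, hP, fun _ _ => rfl⟩,
        fun x => crossProduct (fun i => x i - xT i) (fun i => eval x (w i)),
        ⟨w, hw, fun _ => rfl⟩, ?_⟩
      funext x
      funext i
      show v x i = eval x (pderiv i P)
          + crossProduct (fun j => x j - xT j) (fun k => eval x (w k)) i
      rw [heval x i, hid i, map_add, eval_crossP_sub]
    · rintro ⟨g, ⟨P, hP, hg⟩, c, ⟨w, hw, hc⟩, rfl⟩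
      refine ⟨fun i => pderiv i P + crossP (fun j => X j - C (xT j)) w i, ?_, ?_⟩
      · intro i
        refine (totalDegree_add _ _).trans
          (max_le (totalDegree_pderiv_le' _ _ _ hP) ?_)
        rcases hw with hw | hw
        · have hl : 1 ≤ ℓ := le_trans (by omega) (hw 0)
          have h2 := totalDegree_crossP_le xT w (ℓ - 1)
            (fun j => by have := hw j; omega) i
          omega
        · have hz : crossP (fun j => X j - C (xT j)) w i = 0 := by
            fin_cases i
            · show (X 1 - C (xT 1)) * w 2 - (X 2 - C (xT 2)) * w 1 = 0
              rw [hw 1, hw 2, mul_zero, mul_zero, sub_zero]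
            · show (X 2 - C (xT 2)) * w 0 - (X 0 - C (xT 0)) * w 2 = 0
              rw [hw 0, hw 2, mul_zero, mul_zero, sub_zero]
            · show (X 0 - C (xT 0)) * w 1 - (X 1 - C (xT 1)) * w 0 = 0
              rw [hw 0, hw 1, mul_zero, mul_zero, sub_zero]
          rw [hz]
          simp
      · intro x i
        show g x i + c x i = eval x (pderiv i P + crossP (fun j => X j - C (xT j)) w i)
        rw [map_add, eval_crossP_sub, ← hg x i, hc x]
  · rintro g g' c c' ⟨P, hP, hg⟩ ⟨P', hP', hg'⟩ ⟨w, hw, hc⟩ ⟨w', hw', hc'⟩ heq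
    have hfun : ∀ i : Fin 3, (pderiv i P + crossP (fun j => X j - C (xT j)) w i : MP)
        = pderiv i P' + crossP (fun j => X j - C (xT j)) w' i := by
      intro i
      apply MvPolynomial.funext
      intro x
      have h1 : g x i + c x i = g' x i + c' x i := congrFun (congrFun heq x) i
      rw [map_add, map_add, eval_crossP_sub, eval_crossP_sub, ← hg x i, ← hg' x i]
      calc g x i + crossProduct (fun j => x j - xT j) (fun k => eval x (w k)) i
          = g x i + c x i := by rw [hc x]
        _ = g' x i + c' x i := h1
        _ = _ := by rw [hc' x]
    set Ω : Fin 3 → MP := fun k => w' k - w k with hΩ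
    have hqi : ∀ i, pderiv i (P - P') = crossP (fun j => X j - C (xT j)) Ω i := by
      intro i
      have h2 := hfun i
      have h3 := crossP_sub (fun j => X j - C (xT j)) w' w i
      rw [map_sub, hΩ, h3]
      linear_combination h2
    have hdot : (X 0 - C (xT 0)) * pderiv 0 (P - P') + (X 1 - C (xT 1)) * pderiv 1 (P - P')
        + (X 2 - C (xT 2)) * pderiv 2 (P - P') = 0 := by
      rw [hqi 0, hqi 1, hqi 2]
      have c0 : crossP (fun j => (X j : MP) - C (xT j)) Ω 0
          = (X 1 - C (xT 1)) * Ω 2 - (X 2 - C (xT 2)) * Ω 1 := rfl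
      have c1 : crossP (fun j => (X j : MP) - C (xT j)) Ω 1
          = (X 2 - C (xT 2)) * Ω 0 - (X 0 - C (xT 0)) * Ω 2 := rfl
      have c2 : crossP (fun j => (X j : MP) - C (xT j)) Ω 2
          = (X 0 - C (xT 0)) * Ω 1 - (X 1 - C (xT 1)) * Ω 0 := rfl
      rw [c0, c1, c2]
      ring
    have hsx : ∀ i : Fin 3, shiftP xT ((X i : MP) - C (xT i)) = X i := by
      intro i
      show bind₁ _ _ = _
      rw [map_sub, bind₁_X_right, bind₁_C_right]
      ring
    have hshift : X 0 * pderiv 0 (shiftP xT (P - P')) + X 1 * pderiv 1 (shiftP xT (P - P'))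
        + X 2 * pderiv 2 (shiftP xT (P - P')) = 0 := by
      have h4 := congrArg (shiftP xT) hdot
      have h5 : shiftP xT ((X 0 - C (xT 0)) * pderiv 0 (P - P')
            + (X 1 - C (xT 1)) * pderiv 1 (P - P')
            + (X 2 - C (xT 2)) * pderiv 2 (P - P'))
          = shiftP xT (X 0 - C (xT 0)) * shiftP xT (pderiv 0 (P - P'))
            + shiftP xT (X 1 - C (xT 1)) * shiftP xT (pderiv 1 (P - P'))
            + shiftP xT (X 2 - C (xT 2)) * shiftP xT (pderiv 2 (P - P')) := by
        show bind₁ _ _ = _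
        rw [map_add, map_add, map_mul, map_mul, map_mul]
        rfl
      rw [h5] at h4
      rw [hsx 0, hsx 1, hsx 2, ← pderiv_shiftP, ← pderiv_shiftP, ← pderiv_shiftP] at h4
      exact h4.trans (map_zero _)
    have hpp : ∀ i : Fin 3, pderiv i P = pderiv i P' := by
      intro i
      have h6 := grad_zero hshift i
      rw [pderiv_shiftP] at h6
      have h6' : shiftP xT (pderiv i (P - P')) = shiftP xT 0 := by
        rw [h6]
        exact (map_zero _).symm
      have h7 := shiftP_inj h6'
      rw [map_sub, sub_eq_zero] at h7
      exact h7
    have hgg : g = g' := by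
      funext x
      funext i
      rw [hg x i, hg' x i, hpp i]
    exact ⟨hgg, add_left_cancel (hgg ▸ heq)⟩
end
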